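/- For 0 < α < 1 and L > 0, the fixed-memory-length fractional derivative of sin satisfies D^α_L(sin)(t) = a·sin(t-L) + b·cos(t-L), where a = L^(-α)·E_{2,1-α}(-L²) and b = L^(1-α)·E_{2,2-α}(-L²). In particular, D^α_L(sin) is periodic with period 2π. -/

import Mathlib

open Real

noncomputable def Dfml (α L : ℝ) (f : ℝ → ℝ) (t : ℝ) : ℝ :=
  f (t - L) * L ^ (-α) / Real.Gamma (1 - α)
  + deriv f (t - L) * L ^ (1 - α) / Real.Gamma (2 - α)
  + (1 / Real.Gamma (2 - α)) * ∫ τ in (t - L)..t, (t - τ) ^ (1 - α) * deriv (deriv f) τ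

noncomputable def mittagLeffler (a b z : ℝ) : ℝ := ∑' k : ℕ, z ^ k / Real.Gamma (a * k + b)

open MeasureTheory intervalIntegral Nat

-- Gamma product
lemma Gamma_prod (x : ℝ) (hx : 0 < x) (m : ℕ) :
    Real.Gamma (x + m) = Real.Gamma x * ∏ j ∈ Finset.range m, (x + j) := by
  induction m with
  | zero => simp
  | succ n ih =>
    have hxn : x + n ≠ 0 := by positivity
    have : x + (n+1 : ℕ) = (x + n) + 1 := by push_cast; ring
    rw [this, Real.Gamma_add_one hxn, ih, Finset.prod_range_succ]
    ring

-- real beta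
lemma real_beta (x : ℝ) (hx : 0 < x) (n : ℕ) :
    ∫ s in (0 : ℝ)..1, s ^ (x - 1) * (1 - s) ^ n
      = (n ! : ℝ) / ∏ j ∈ Finset.range (n + 1), (x + j) := by
  have h1 : Complex.betaIntegral x (n + 1)
      = ((∫ s in (0 : ℝ)..1, s ^ (x - 1) * (1 - s) ^ n : ℝ) : ℂ) := by
    rw [Complex.betaIntegral, ← intervalIntegral.integral_ofReal]
    refine intervalIntegral.integral_congr fun s hs => ?_
    rw [Set.uIcc_of_le (by norm_num : (0:ℝ) ≤ 1)] at hs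
    have hs0 : 0 ≤ s := hs.1
    have hs1 : 0 ≤ 1 - s := by linarith [hs.2]
    have e1 : ((s : ℂ)) ^ ((x : ℂ) - 1) = ((s ^ (x - 1) : ℝ) : ℂ) := by
      rw [Complex.ofReal_cpow hs0]; push_cast; ring_nf
    have e2 : (1 - (s : ℂ)) ^ ((n : ℂ) + 1 - 1) = (((1 - s) ^ n : ℝ) : ℂ) := by
      rw [add_sub_cancel_right, Complex.cpow_natCast]; push_cast; ring
    rw [e1, e2]; push_cast; ring
  have h2 := Complex.betaIntegral_eval_nat_add_one_right (u := (x : ℂ))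
    (by simpa using hx) n
  rw [h1] at h2
  have h3 : ((∫ s in (0 : ℝ)..1, s ^ (x - 1) * (1 - s) ^ n : ℝ) : ℂ)
      = (((n ! : ℝ) / ∏ j ∈ Finset.range (n + 1), (x + j) : ℝ) : ℂ) := by
    rw [h2]; push_cast; ring
  exact_mod_cast h3

lemma beta_scaled {L : ℝ} (hL : 0 < L) (x : ℝ) (hx : 0 < x) (n : ℕ) :
    ∫ s in (0 : ℝ)..L, s ^ (x - 1) * (L - s) ^ n
      = Real.Gamma x * (n ! : ℝ) / Real.Gamma (x + n + 1) * L ^ (x + n) := by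
  have hc : (L : ℝ) ≠ 0 := hL.ne'
  have key := intervalIntegral.integral_comp_mul_left
    (fun s => s ^ (x - 1) * (L - s) ^ n) hc (a := 0) (b := 1)
  rw [mul_zero, mul_one] at key
  have congr1 : (∫ u in (0 : ℝ)..1, (L * u) ^ (x - 1) * (L - L * u) ^ n)
      = ∫ u in (0 : ℝ)..1, (L ^ (x - 1) * L ^ n) * (u ^ (x - 1) * (1 - u) ^ n) := by
    refine intervalIntegral.integral_congr fun u hu => ?_
    rw [Set.uIcc_of_le (by norm_num : (0:ℝ) ≤ 1)] at hu
    have hu0 : 0 ≤ u := hu.1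
    have : (L * u) ^ (x - 1) = L ^ (x - 1) * u ^ (x - 1) :=
      Real.mul_rpow hL.le hu0
    rw [this]
    have : L - L * u = L * (1 - u) := by ring
    rw [this, mul_pow]
    ring
  rw [congr1, intervalIntegral.integral_const_mul, real_beta x hx n] at key
  have hprod : Real.Gamma (x + n + 1)
      = Real.Gamma x * ∏ j ∈ Finset.range (n + 1), (x + j) := by
    have := Gamma_prod x hx (n + 1)
    rw [← this]; push_cast; ring_nf
  have hGx : Real.Gamma x ≠ 0 := (Real.Gamma_pos_of_pos hx).ne'
  have hprodpos : (0:ℝ) < ∏ j ∈ Finset.range (n + 1), (x + j) :=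
    Finset.prod_pos fun j _ => by positivity
  have key2 : (∫ s in (0 : ℝ)..L, s ^ (x - 1) * (L - s) ^ n)
      = L * (L ^ (x - 1) * L ^ n * ((n ! : ℝ) / ∏ j ∈ Finset.range (n + 1), (x + j))) := by
    rw [key, smul_eq_mul]
    field_simp
  rw [key2, hprod]
  have hLx : L ^ (x - 1) * L ^ n * L = L ^ (x + (n:ℝ)) := by
    rw [← Real.rpow_natCast L n, ← Real.rpow_add hL, ← Real.rpow_add_one hc]
    congr 1
    ring
  rw [← hLx]
  field_simp

lemma interchange {α L : ℝ} (hα1 : α < 1) (hL : 0 < L) (c : ℕ → ℝ) (m : ℕ → ℕ)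
    (hsum : Summable (fun k => |c k| * L ^ (m k))) :
    (∫ s in (0 : ℝ)..L, s ^ (1 - α) * ∑' k, c k * (L - s) ^ (m k))
      = ∑' k, c k * ∫ s in (0 : ℝ)..L, s ^ (1 - α) * (L - s) ^ (m k) := by
  set f : ℕ → ℝ → ℝ := fun k s => s ^ (1 - α) * (c k * (L - s) ^ (m k)) with hf_def
  have hmeas : ∀ k, AEStronglyMeasurable (f k) (volume.restrict (Set.Ioc (0:ℝ) L)) := by
    intro k
    exact ((Real.continuous_rpow_const (by linarith)).mul
      (continuous_const.mul ((continuous_const.sub continuous_id).pow _))).aestronglyMeasurable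
  have hbound : ∀ k, ∀ s ∈ Set.Ioc (0:ℝ) L,
      ‖f k s‖ ≤ L ^ (1 - α) * (|c k| * L ^ (m k)) := by
    intro k s hs
    have hs0 : 0 < s := hs.1
    have hsL : s ≤ L := hs.2
    have h1 : |s ^ (1 - α)| ≤ L ^ (1 - α) := by
      rw [abs_of_nonneg (Real.rpow_nonneg hs0.le _)]
      exact Real.rpow_le_rpow hs0.le hsL (by linarith)
    have h2 : |(L - s) ^ (m k)| ≤ L ^ (m k) := by
      rw [abs_of_nonneg (pow_nonneg (by linarith) _)]
      exact pow_le_pow_left₀ (by linarith) (by linarith) _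
    calc ‖f k s‖ = |s ^ (1 - α)| * (|c k| * |(L - s) ^ (m k)|) := by
          rw [hf_def]; simp [Real.norm_eq_abs, abs_mul]
      _ ≤ L ^ (1 - α) * (|c k| * L ^ (m k)) := by
          apply mul_le_mul h1 _ (by positivity) (by positivity)
          exact mul_le_mul_of_nonneg_left h2 (abs_nonneg _)
  have hsum2 : Summable (fun k => L ^ (1 - α) * (|c k| * L ^ (m k)) * L) :=
    (hsum.mul_left (L ^ (1 - α))).mul_right L
  have hlint : ∀ k, (∫⁻ s in Set.Ioc (0:ℝ) L, ‖f k s‖₊ ∂volume)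
      ≤ ENNReal.ofReal (L ^ (1 - α) * (|c k| * L ^ (m k)) * L) := by
    intro k
    have step1 : (∫⁻ s in Set.Ioc (0:ℝ) L, ‖f k s‖₊ ∂volume)
        ≤ ∫⁻ _ in Set.Ioc (0:ℝ) L,
            ENNReal.ofReal (L ^ (1 - α) * (|c k| * L ^ (m k))) ∂volume := by
      apply MeasureTheory.setLIntegral_mono measurable_const
      intro s hs
      rw [← enorm_eq_nnnorm, ← ofReal_norm]
      exact ENNReal.ofReal_le_ofReal (hbound k s hs)
    refine step1.trans ?_
    rw [MeasureTheory.setLIntegral_const, Real.volume_Ioc, sub_zero,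
      ← ENNReal.ofReal_mul (by positivity)]
  have htop : (∑' k, ∫⁻ s in Set.Ioc (0:ℝ) L, ‖f k s‖₊ ∂volume) ≠ ⊤ := by
    refine ne_top_of_le_ne_top ?_ (ENNReal.tsum_le_tsum hlint)
    rw [← ENNReal.ofReal_tsum_of_nonneg (fun k => by positivity) hsum2]
    exact ENNReal.ofReal_ne_top
  have key := MeasureTheory.integral_tsum hmeas htop
  have lhs_eq : (∫ s in (0 : ℝ)..L, s ^ (1 - α) * ∑' k, c k * (L - s) ^ (m k))
      = ∫ s in Set.Ioc (0:ℝ) L, ∑' k, f k s ∂volume := by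
    rw [intervalIntegral.integral_of_le hL.le]
    refine MeasureTheory.integral_congr_ae (Filter.Eventually.of_forall fun s => ?_)
    show s ^ (1 - α) * ∑' k, c k * (L - s) ^ (m k)
      = ∑' k, s ^ (1 - α) * (c k * (L - s) ^ (m k))
    exact tsum_mul_left.symm
  rw [lhs_eq, key]
  refine tsum_congr fun k => ?_
  rw [← intervalIntegral.integral_of_le hL.le, hf_def]
  simp_rw [mul_left_comm]
  rw [intervalIntegral.integral_const_mul]

lemma summable_ML {b : ℝ} (hb : 0 < b) (z : ℝ) :
    Summable (fun k : ℕ => z ^ k / Real.Gamma (2 * (k:ℝ) + b)) := by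
  obtain ⟨N, hN⟩ := exists_nat_ge |z|
  apply summable_of_ratio_norm_eventually_le (r := 1/2) (by norm_num)
  filter_upwards [Filter.eventually_ge_atTop (max N 1)] with k hk
  have hkN : (N:ℝ) ≤ k := Nat.cast_le.mpr (le_trans (le_max_left _ _) hk)
  have hk1 : (1:ℝ) ≤ k := Nat.one_le_cast.mpr (le_trans (le_max_right _ _) hk)
  have hpos1 : (0:ℝ) < 2 * (k:ℝ) + b := by positivity
  have hpos2 : (0:ℝ) < 2 * (k:ℝ) + b + 1 := by positivity
  have hG : Real.Gamma (2 * ((k:ℝ)+1) + b)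
      = (2 * (k:ℝ) + b + 1) * ((2 * (k:ℝ) + b) * Real.Gamma (2 * (k:ℝ) + b)) := by
    have e1 : 2 * ((k:ℝ)+1) + b = (2 * (k:ℝ) + b + 1) + 1 := by ring
    rw [e1, Real.Gamma_add_one hpos2.ne']
    have e2 : 2 * (k:ℝ) + b + 1 = (2 * (k:ℝ) + b) + 1 := by ring
    rw [e2, Real.Gamma_add_one hpos1.ne']
  have hGpos : 0 < Real.Gamma (2 * (k:ℝ) + b) := Real.Gamma_pos_of_pos hpos1
  have hcast : ((k:ℝ)+1) = ((k+1 : ℕ) : ℝ) := by push_cast; ring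
  rw [Real.norm_eq_abs, Real.norm_eq_abs, ← hcast]
  rw [abs_div, abs_div, hG, pow_succ, abs_pow]
  rw [abs_of_pos (by positivity : (0:ℝ) < (2 * (k:ℝ) + b + 1) * ((2 * (k:ℝ) + b) * Real.Gamma (2 * (k:ℝ) + b)))]
  rw [abs_of_pos hGpos, abs_mul, abs_pow]
  have hzk : |z| ≤ 2 * (k:ℝ) + b := by
    have : (k:ℝ) ≤ 2 * (k:ℝ) + b := by linarith
    linarith [hN.trans hkN]
  have hx2 : (2:ℝ) ≤ 2 * (k:ℝ) + b := by linarith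
  have key : |z| / ((2 * (k:ℝ) + b + 1) * (2 * (k:ℝ) + b)) ≤ 1/2 := by
    rw [div_le_iff₀ (by positivity)]
    nlinarith
  calc |z| ^ k * |z| / ((2 * (k:ℝ) + b + 1) * ((2 * (k:ℝ) + b) * Real.Gamma (2 * (k:ℝ) + b)))
      = (|z| ^ k / Real.Gamma (2 * (k:ℝ) + b))
        * (|z| / ((2 * (k:ℝ) + b + 1) * (2 * (k:ℝ) + b))) := by
        field_simp
    _ ≤ (|z| ^ k / Real.Gamma (2 * (k:ℝ) + b)) * (1/2) :=
        mul_le_mul_of_nonneg_left key (by positivity)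
    _ = 1/2 * (|z| ^ k / Real.Gamma (2 * (k:ℝ) + b)) := by ring

lemma cos_int {α L : ℝ} (hα1 : α < 1) (hL : 0 < L) :
    (∫ s in (0 : ℝ)..L, s ^ (1 - α) * Real.cos (L - s))
      = Real.Gamma (2 - α) * ∑' k : ℕ,
          (-1) ^ k * L ^ (2 * (k:ℝ) + 2 - α) / Real.Gamma (2 * (k:ℝ) + 3 - α) := by
  have hx : (0:ℝ) < 2 - α := by linarith
  have hintc : (∫ s in (0 : ℝ)..L, s ^ (1 - α) * Real.cos (L - s))
      = ∫ s in (0 : ℝ)..L,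
          s ^ (1 - α) * ∑' k : ℕ, ((-1) ^ k / ((2*k)! : ℝ)) * (L - s) ^ (2*k) := by
    refine intervalIntegral.integral_congr fun s _ => ?_
    congr 1
    rw [Real.cos_eq_tsum]
    exact tsum_congr fun k => by ring
  have hsum : Summable (fun k : ℕ => |(-1) ^ k / ((2*k)! : ℝ)| * L ^ (2*k)) := by
    have h1 : Summable (fun n : ℕ => L ^ n / (n ! : ℝ)) := Real.summable_pow_div_factorial L
    have h2 := h1.comp_injective
      (fun a b h => by have : 2*a = 2*b := h; omega : Function.Injective (fun k : ℕ => 2*k))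
    refine h2.congr fun k => ?_
    have : |(-1:ℝ) ^ k / ((2*k)! : ℝ)| = 1 / ((2*k)! : ℝ) := by
      rw [abs_div, abs_pow, abs_neg, abs_one, one_pow]
      congr 1
      exact abs_of_pos (by positivity)
    rw [this]
    simp [Function.comp]
    ring
  rw [hintc, interchange hα1 hL _ _ hsum, ← tsum_mul_left]
  refine tsum_congr fun k => ?_
  have e0 : (1 - α) = (2 - α) - 1 := by ring
  rw [e0, beta_scaled hL (2 - α) hx (2*k)]
  have e1 : (2 - α) + ((2*k : ℕ) : ℝ) + 1 = 2 * (k:ℝ) + 3 - α := by push_cast; ring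
  have e2 : (2 - α) + ((2*k : ℕ) : ℝ) = 2 * (k:ℝ) + 2 - α := by push_cast; ring
  rw [e1, e2]
  have hfact : (((2*k)!) : ℝ) ≠ 0 := by positivity
  have hG2 : Real.Gamma (2 * (k:ℝ) + 3 - α) ≠ 0 := by
    have : (0:ℝ) < 2 * (k:ℝ) + 3 - α := by nlinarith [Nat.cast_nonneg (α := ℝ) k]
    exact (Real.Gamma_pos_of_pos this).ne'
  field_simp

lemma sin_int {α L : ℝ} (hα1 : α < 1) (hL : 0 < L) :
    (∫ s in (0 : ℝ)..L, s ^ (1 - α) * Real.sin (L - s))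
      = Real.Gamma (2 - α) * ∑' k : ℕ,
          (-1) ^ k * L ^ (2 * (k:ℝ) + 3 - α) / Real.Gamma (2 * (k:ℝ) + 4 - α) := by
  have hx : (0:ℝ) < 2 - α := by linarith
  have hintc : (∫ s in (0 : ℝ)..L, s ^ (1 - α) * Real.sin (L - s))
      = ∫ s in (0 : ℝ)..L,
          s ^ (1 - α) * ∑' k : ℕ, ((-1) ^ k / ((2*k+1)! : ℝ)) * (L - s) ^ (2*k+1) := by
    refine intervalIntegral.integral_congr fun s _ => ?_
    congr 1
    rw [Real.sin_eq_tsum]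
    exact tsum_congr fun k => by ring
  have hsum : Summable (fun k : ℕ => |(-1) ^ k / ((2*k+1)! : ℝ)| * L ^ (2*k+1)) := by
    have h1 : Summable (fun n : ℕ => L ^ n / (n ! : ℝ)) := Real.summable_pow_div_factorial L
    have h2 := h1.comp_injective
      (fun a b h => by have : 2*a+1 = 2*b+1 := h; omega : Function.Injective (fun k : ℕ => 2*k+1))
    refine h2.congr fun k => ?_
    have : |(-1:ℝ) ^ k / ((2*k+1)! : ℝ)| = 1 / ((2*k+1)! : ℝ) := by
      rw [abs_div, abs_pow, abs_neg, abs_one, one_pow]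
      congr 1
      exact abs_of_pos (by positivity)
    rw [this]
    simp [Function.comp]
    ring
  rw [hintc, interchange hα1 hL _ _ hsum, ← tsum_mul_left]
  refine tsum_congr fun k => ?_
  have e0 : (1 - α) = (2 - α) - 1 := by ring
  rw [e0, beta_scaled hL (2 - α) hx (2*k+1)]
  have e1 : (2 - α) + ((2*k+1 : ℕ) : ℝ) + 1 = 2 * (k:ℝ) + 4 - α := by push_cast; ring
  have e2 : (2 - α) + ((2*k+1 : ℕ) : ℝ) = 2 * (k:ℝ) + 3 - α := by push_cast; ring
  rw [e1, e2]
  have hfact : (((2*k+1)!) : ℝ) ≠ 0 := by positivity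
  have hG2 : Real.Gamma (2 * (k:ℝ) + 4 - α) ≠ 0 := by
    have : (0:ℝ) < 2 * (k:ℝ) + 4 - α := by nlinarith [Nat.cast_nonneg (α := ℝ) k]
    exact (Real.Gamma_pos_of_pos this).ne'
  field_simp

lemma idI {α L : ℝ} (hα0 : 0 < α) (hα1 : α < 1) (hL : 0 < L) :
    L ^ (-α) / Real.Gamma (1 - α)
      - ∑' k : ℕ, (-1) ^ k * L ^ (2 * (k:ℝ) + 2 - α) / Real.Gamma (2 * (k:ℝ) + 3 - α)
    = L ^ (-α) * mittagLeffler 2 (1 - α) (-L ^ 2) := by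
  have hb : (0:ℝ) < 1 - α := by linarith
  have hg : Summable (fun k : ℕ => (-L ^ 2) ^ k / Real.Gamma (2 * (k:ℝ) + (1 - α))) :=
    summable_ML hb _
  have hML : mittagLeffler 2 (1 - α) (-L ^ 2)
      = ∑' k : ℕ, (-L ^ 2) ^ k / Real.Gamma (2 * (k:ℝ) + (1 - α)) := rfl
  rw [hML, Summable.tsum_eq_zero_add hg]
  have h0 : (-L ^ 2 : ℝ) ^ (0:ℕ) / Real.Gamma (2 * ((0:ℕ):ℝ) + (1 - α))
      = 1 / Real.Gamma (1 - α) := by norm_num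
  rw [h0]
  have hterm : ∀ k : ℕ, (-1) ^ k * L ^ (2 * (k:ℝ) + 2 - α) / Real.Gamma (2 * (k:ℝ) + 3 - α)
      = -(L ^ (-α) * ((-L ^ 2) ^ (k+1) / Real.Gamma (2 * ((k+1 : ℕ):ℝ) + (1 - α)))) := by
    intro k
    have eG : 2 * ((k+1 : ℕ):ℝ) + (1 - α) = 2 * (k:ℝ) + 3 - α := by push_cast; ring
    rw [eG]
    have epow : (-L ^ 2 : ℝ) ^ (k+1) = -((-1) ^ k * L ^ (2*k+2 : ℕ)) := by
      rw [neg_pow, pow_succ, ← pow_mul]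
      have : 2*(k+1) = 2*k+2 := by ring
      rw [this]
      ring
    rw [epow]
    have eL : L ^ (-α) * (L : ℝ) ^ (2*k+2 : ℕ) = L ^ (2 * (k:ℝ) + 2 - α) := by
      rw [← Real.rpow_natCast L (2*k+2), ← Real.rpow_add hL]
      congr 1
      push_cast; ring
    field_simp
    rw [eL]
    ring_nf
  rw [tsum_congr hterm, tsum_neg, tsum_mul_left]
  ring

lemma idII {α L : ℝ} (hα0 : 0 < α) (hα1 : α < 1) (hL : 0 < L) :
    L ^ (1 - α) / Real.Gamma (2 - α)
      - ∑' k : ℕ, (-1) ^ k * L ^ (2 * (k:ℝ) + 3 - α) / Real.Gamma (2 * (k:ℝ) + 4 - α)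
    = L ^ (1 - α) * mittagLeffler 2 (2 - α) (-L ^ 2) := by
  have hb : (0:ℝ) < 2 - α := by linarith
  have hg : Summable (fun k : ℕ => (-L ^ 2) ^ k / Real.Gamma (2 * (k:ℝ) + (2 - α))) :=
    summable_ML hb _
  have hML : mittagLeffler 2 (2 - α) (-L ^ 2)
      = ∑' k : ℕ, (-L ^ 2) ^ k / Real.Gamma (2 * (k:ℝ) + (2 - α)) := rfl
  rw [hML, Summable.tsum_eq_zero_add hg]
  have h0 : (-L ^ 2 : ℝ) ^ (0:ℕ) / Real.Gamma (2 * ((0:ℕ):ℝ) + (2 - α))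
      = 1 / Real.Gamma (2 - α) := by norm_num
  rw [h0]
  have hterm : ∀ k : ℕ, (-1) ^ k * L ^ (2 * (k:ℝ) + 3 - α) / Real.Gamma (2 * (k:ℝ) + 4 - α)
      = -(L ^ (1 - α) * ((-L ^ 2) ^ (k+1) / Real.Gamma (2 * ((k+1 : ℕ):ℝ) + (2 - α)))) := by
    intro k
    have eG : 2 * ((k+1 : ℕ):ℝ) + (2 - α) = 2 * (k:ℝ) + 4 - α := by push_cast; ring
    rw [eG]
    have epow : (-L ^ 2 : ℝ) ^ (k+1) = -((-1) ^ k * L ^ (2*k+2 : ℕ)) := by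
      rw [neg_pow, pow_succ, ← pow_mul]
      have : 2*(k+1) = 2*k+2 := by ring
      rw [this]
      ring
    rw [epow]
    have eL : L ^ (1 - α) * (L : ℝ) ^ (2*k+2 : ℕ) = L ^ (2 * (k:ℝ) + 3 - α) := by
      rw [← Real.rpow_natCast L (2*k+2), ← Real.rpow_add hL]
      congr 1
      push_cast; ring
    field_simp
    rw [← eL]
  rw [tsum_congr hterm, tsum_neg, tsum_mul_left]
  ring

theorem stmt_5 (α L : ℝ) (hα0 : 0 < α) (hα1 : α < 1) (hL : 0 < L) :
    (∀ t, Dfml α L Real.sin t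
      = L ^ (-α) * mittagLeffler 2 (1 - α) (-L ^ 2) * Real.sin (t - L)
        + L ^ (1 - α) * mittagLeffler 2 (2 - α) (-L ^ 2) * Real.cos (t - L))
    ∧ ∀ t, Dfml α L Real.sin (t + 2 * Real.pi) = Dfml α L Real.sin t := by
  have hG : Real.Gamma (2 - α) ≠ 0 := (Real.Gamma_pos_of_pos (by linarith)).ne'
  have hc1 : Continuous (fun s : ℝ => s ^ (1 - α) * Real.cos (L - s)) :=
    (Real.continuous_rpow_const (by linarith)).mul
      (Real.continuous_cos.comp (continuous_const.sub continuous_id))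
  have hc2 : Continuous (fun s : ℝ => s ^ (1 - α) * Real.sin (L - s)) :=
    (Real.continuous_rpow_const (by linarith)).mul
      (Real.continuous_sin.comp (continuous_const.sub continuous_id))
  have main : ∀ t, Dfml α L Real.sin t
      = L ^ (-α) * mittagLeffler 2 (1 - α) (-L ^ 2) * Real.sin (t - L)
        + L ^ (1 - α) * mittagLeffler 2 (2 - α) (-L ^ 2) * Real.cos (t - L) := by
    intro t
    have hdd : deriv (deriv Real.sin) = fun x => -Real.sin x := by
      rw [Real.deriv_sin, Real.deriv_cos']
    have hJ1 : (∫ τ in (t - L)..t, (t - τ) ^ (1 - α) * deriv (deriv Real.sin) τ)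
        = ∫ τ in (t - L)..t, (fun s => s ^ (1 - α) * (-Real.sin (t - s))) (t - τ) := by
      rw [hdd]
      refine intervalIntegral.integral_congr fun τ _ => ?_
      simp only [sub_sub_cancel]
    have hsub := intervalIntegral.integral_comp_sub_left
      (a := t - L) (b := t) (fun s => s ^ (1 - α) * (-Real.sin (t - s))) t
    rw [sub_self, sub_sub_cancel] at hsub
    have hsplit : (∫ s in (0:ℝ)..L, s ^ (1 - α) * (-Real.sin (t - s)))
        = (-Real.sin (t - L)) * (∫ s in (0:ℝ)..L, s ^ (1 - α) * Real.cos (L - s))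
          + (-Real.cos (t - L)) * (∫ s in (0:ℝ)..L, s ^ (1 - α) * Real.sin (L - s)) := by
      have congr2 : (∫ s in (0:ℝ)..L, s ^ (1 - α) * (-Real.sin (t - s)))
          = ∫ s in (0:ℝ)..L,
              ((-Real.sin (t - L)) * (s ^ (1 - α) * Real.cos (L - s))
                + (-Real.cos (t - L)) * (s ^ (1 - α) * Real.sin (L - s))) := by
        refine intervalIntegral.integral_congr fun s _ => ?_
        have : t - s = (t - L) + (L - s) := by ring
        rw [this, Real.sin_add]
        ring
      rw [congr2, intervalIntegral.integral_add
        ((hc1.intervalIntegrable _ _).const_mul _)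
        ((hc2.intervalIntegrable _ _).const_mul _),
        intervalIntegral.integral_const_mul, intervalIntegral.integral_const_mul]
    rw [Dfml, hJ1, hsub, hsplit, cos_int hα1 hL, sin_int hα1 hL, Real.deriv_sin]
    rw [← idI hα0 hα1 hL, ← idII hα0 hα1 hL]
    field_simp
    ring
  refine ⟨main, fun t => ?_⟩
  rw [main, main]
  have h1 : t + 2 * Real.pi - L = t - L + 2 * Real.pi := by ring
  rw [h1, Real.sin_add_two_pi, Real.cos_add_two_pi]
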